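/- Let L, R, D be non-negative real numbers with L > 0, and λ a complex number with Im(λ) > 0 and |λ|² > D/L. Then z := R + L·λ + D/λ is nonzero and ρ := 1/z satisfies -Im(ρ)/|ρ| ≥ (1 - D/(L|λ|²)) / (|λ| + D/(L|λ|) + R/L) · Im(λ). -/

import Mathlib

theorem neg_im_div_abs_ge_large_im (L R D : ℝ) (hL : 0 < L) (hR : 0 ≤ R) (hD : 0 ≤ D)
    (lam : ℂ) (him : 0 < lam.im) (habs : (‖lam‖) ^ 2 > D / L) :
    (R : ℂ) + (L : ℂ) * lam + (D : ℂ) / lam ≠ 0 ∧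
    ∀ z rho : ℂ, z = (R : ℂ) + (L : ℂ) * lam + (D : ℂ) / lam → rho = 1 / z →
      -rho.im / ‖rho‖ ≥
        (1 - D / (L * (‖lam‖) ^ 2)) /
          (‖lam‖ + D / (L * ‖lam‖) + R / L) * lam.im := by
  set a := ‖lam‖ with ha
  have hlam0 : lam ≠ 0 := by
    intro h; rw [h] at him; simp at him
  have ha0 : 0 < a := norm_pos_iff.mpr hlam0
  have hDa : D < L * a ^ 2 := by
    have := (div_lt_iff₀ hL).mp habs
    nlinarith
  have hns : Complex.normSq lam = a ^ 2 := by
    rw [ha, ← Complex.sq_norm]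
  have him_z : ((R : ℂ) + (L : ℂ) * lam + (D : ℂ) / lam).im
      = lam.im * (L - D / a ^ 2) := by
    simp [Complex.add_im, Complex.div_im, Complex.mul_im, hns]
    field_simp
    ring
  have hz_im_pos : 0 < ((R : ℂ) + (L : ℂ) * lam + (D : ℂ) / lam).im := by
    rw [him_z]
    have : 0 < L - D / a ^ 2 := by
      rw [sub_pos, div_lt_iff₀ (by positivity)]
      nlinarith
    positivity
  have hz_ne : (R : ℂ) + (L : ℂ) * lam + (D : ℂ) / lam ≠ 0 := by
    intro h
    rw [h] at hz_im_pos
    simp at hz_im_pos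
  refine ⟨hz_ne, ?_⟩
  intro z rho hz hrho
  subst hz; subst hrho
  set w := (R : ℂ) + (L : ℂ) * lam + (D : ℂ) / lam with hw
  have habsw_pos : 0 < ‖w‖ := norm_pos_iff.mpr hz_ne
  have hbound : ‖w‖ ≤ R + L * a + D / a := by
    calc ‖w‖ ≤ ‖(R : ℂ) + (L : ℂ) * lam‖ + ‖(D : ℂ) / lam‖ := by
          rw [hw]; exact norm_add_le _ _
      _ ≤ ‖(R : ℂ)‖ + ‖(L : ℂ) * lam‖ + ‖(D : ℂ) / lam‖ := by
          gcongr; exact norm_add_le _ _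
      _ = R + L * a + D / a := by
          rw [norm_mul, norm_div]
          simp [Complex.norm_real, Real.norm_eq_abs, abs_of_nonneg hR, abs_of_nonneg hD, abs_of_pos hL, ha]
  -- LHS equals w.im / |w|
  have hlhs : -(1 / w).im / ‖1 / w‖ = w.im / ‖w‖ := by
    rw [one_div, Complex.inv_im, norm_inv]
    rw [Complex.normSq_eq_norm_sq]
    field_simp
  rw [hlhs]
  -- rewrite RHS
  have hrhs : (1 - D / (L * a ^ 2)) / (a + D / (L * a) + R / L) * lam.im
      = lam.im * (L - D / a ^ 2) / (R + L * a + D / a) := by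
    have hden : 0 < R + L * a + D / a := by positivity
    field_simp
    ring
  rw [hrhs, him_z]
  apply div_le_div_of_nonneg_left (le_of_lt _) habsw_pos hbound
  rw [← him_z]; exact hz_im_pos
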